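/- In the sequential DINA model, if β_{j,1}⁻ = 0 for all items j and the Q¹-matrix (rows q_{j,1}) contains no row equal to e₁, then the attribute profiles 0 and e₁ give zero probability of any nonzero response to every item, so the joint response distribution depends on (p_0, p_{e₁}) only through p_0 + p_{e₁}; hence these parameters are not identifiable. -/

import Mathlib

/-- `α` masters the requirements `q`: `α ⪰ q` coordinatewise. -/
def seqCapable {K : ℕ} (q α : Fin K → Bool) : Prop := ∀ k, q k = true → α k = true

instance {K : ℕ} (q α : Fin K → Bool) : Decidable (seqCapable q α) := by
  unfold seqCapable; infer_instance

/-- Conditional continuation probability `P(R_j ≥ l | R_j ≥ l-1, α)` in the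
sequential DINA model. -/
def seqCont {J K : ℕ} (q : Fin J → ℕ → Fin K → Bool) (βp βm : Fin J → ℕ → ℝ)
    (α : Fin K → Bool) (j : Fin J) (l : ℕ) : ℝ :=
  if seqCapable (q j l) α then βp j l else βm j l

/-- `P(R_j ≥ r | α) = ∏_{l=1}^r` continuation probabilities. -/
def seqCum {J K : ℕ} (q : Fin J → ℕ → Fin K → Bool) (βp βm : Fin J → ℕ → ℝ)
    (α : Fin K → Bool) (j : Fin J) (r : ℕ) : ℝ :=
  ∏ l ∈ Finset.Icc 1 r, seqCont q βp βm α j l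

/-- `P(R_j = r | α)`, with the top continuation probability `S(H_j + 1) = 0`. -/
def seqCat {J K : ℕ} (H : Fin J → ℕ) (q : Fin J → ℕ → Fin K → Bool)
    (βp βm : Fin J → ℕ → ℝ) (α : Fin K → Bool) (j : Fin J) (r : ℕ) : ℝ :=
  seqCum q βp βm α j r * (1 - if r < H j then seqCont q βp βm α j (r + 1) else 0)

/-- Joint conditional probability of the response vector `r` given `α`. -/
def seqJoint {J K : ℕ} (H : Fin J → ℕ) (q : Fin J → ℕ → Fin K → Bool)
    (βp βm : Fin J → ℕ → ℝ) (α : Fin K → Bool) (r : Fin J → ℕ) : ℝ :=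
  ∏ j, seqCat H q βp βm α j (r j)

/-- In the sequential DINA model, if `β_{j,1}⁻ = 0` for all items and no first-category
q-vector equals `e₁` (first-category q-vectors being nonzero), then the profiles `0`
and `e₁` give zero probability of any nonzero response; the joint response
distribution depends on `(p_0, p_{e₁})` only through `p_0 + p_{e₁}`; hence the
parameters are not identifiable. -/
theorem stmt_9 (J K : ℕ) (hJ : 0 < J) (hK : 0 < K)
    (H : Fin J → ℕ) (hH : ∀ j, 1 ≤ H j)
    (q : Fin J → ℕ → Fin K → Bool) (βp βm : Fin J → ℕ → ℝ)
    (hβ : ∀ j l, 1 ≤ l → l ≤ H j → 0 ≤ βm j l ∧ βm j l < βp j l ∧ βp j l ≤ 1)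
    (hβm1 : ∀ j, βm j 1 = 0)
    (hq0 : ∀ j, q j 1 ≠ (fun _ => false))
    (hqe1 : ∀ j, q j 1 ≠ (fun (k : Fin K) => decide ((k : ℕ) = 0))) :
    (∀ j : Fin J, ∀ r, 1 ≤ r → r ≤ H j →
      seqCat H q βp βm (fun _ => false) j r = 0 ∧
      seqCat H q βp βm (fun k => decide ((k : ℕ) = 0)) j r = 0) ∧
    (∀ p pbar : (Fin K → Bool) → ℝ,
      (∀ α : Fin K → Bool, α ≠ (fun _ => false) → α ≠ (fun (k : Fin K) => decide ((k : ℕ) = 0)) →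
        p α = pbar α) →
      p (fun _ => false) + p (fun k => decide ((k : ℕ) = 0))
        = pbar (fun _ => false) + pbar (fun k => decide ((k : ℕ) = 0)) →
      ∀ r : Fin J → ℕ,
        (∑ α, p α * seqJoint H q βp βm α r)
          = ∑ α, pbar α * seqJoint H q βp βm α r) ∧
    (∃ p pbar : (Fin K → Bool) → ℝ, p ≠ pbar ∧
      (∀ α, 0 < p α) ∧ (∀ α, 0 < pbar α) ∧
      (∑ α, p α) = 1 ∧ (∑ α, pbar α) = 1 ∧
      ∀ r : Fin J → ℕ,
        (∑ α, p α * seqJoint H q βp βm α r)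
          = ∑ α, pbar α * seqJoint H q βp βm α r) := by
  classical
  set α0 : Fin K → Bool := (fun _ => false) with hα0def
  set α1 : Fin K → Bool := (fun k => decide ((k : ℕ) = 0)) with hα1def
  have hne : α0 ≠ α1 := by
    intro h
    have := congrFun h ⟨0, hK⟩
    simp [hα0def, hα1def] at this
  have hcap0 : ∀ j, ¬ seqCapable (q j 1) α0 := by
    intro j hc
    apply hq0 j
    funext k
    cases h : q j 1 k with
    | false => rfl
    | true => exact absurd (hc k h) (by simp [hα0def])
  have hcap1 : ∀ j, ¬ seqCapable (q j 1) α1 := by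
    intro j hc
    by_cases h0 : q j 1 ⟨0, hK⟩ = true
    · apply hqe1 j
      funext k
      by_cases hk : (k : ℕ) = 0
      · have hkk : k = ⟨0, hK⟩ := Fin.ext hk
        subst hkk
        simp [hα1def, h0]
      · cases h : q j 1 k with
        | false => simp [hα1def, hk]
        | true =>
          have := hc k h
          simp [hα1def, hk] at this
    · apply hq0 j
      funext k
      cases h : q j 1 k with
      | false => rfl
      | true =>
        have := hc k h
        simp [hα1def] at this
        have hkk : k = ⟨0, hK⟩ := Fin.ext this
        rw [hkk] at h
        exact absurd h h0
  have hcont : ∀ j (α : Fin K → Bool), ¬ seqCapable (q j 1) α →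
      seqCont q βp βm α j 1 = 0 := by
    intro j α h
    simp [seqCont, h, hβm1]
  have hcat_pos : ∀ j (α : Fin K → Bool), ¬ seqCapable (q j 1) α →
      ∀ r, 1 ≤ r → seqCat H q βp βm α j r = 0 := by
    intro j α h r hr
    have hcum : seqCum q βp βm α j r = 0 := by
      apply Finset.prod_eq_zero (Finset.mem_Icc.mpr ⟨le_refl 1, hr⟩)
      exact hcont j α h
    simp [seqCat, hcum]
  have hcat_zero : ∀ j (α : Fin K → Bool), ¬ seqCapable (q j 1) α →
      seqCat H q βp βm α j 0 = 0 + 1 := by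
    intro j α h
    have h1 : (0 : ℕ) < H j := hH j
    simp [seqCat, seqCum, hcont j α h, h1]
  have hjoint : ∀ r : Fin J → ℕ,
      seqJoint H q βp βm α0 r = seqJoint H q βp βm α1 r := by
    intro r
    unfold seqJoint
    apply Finset.prod_congr rfl
    intro j _
    rcases Nat.eq_zero_or_pos (r j) with h | h
    · rw [h, hcat_zero j α0 (hcap0 j), hcat_zero j α1 (hcap1 j)]
    · rw [hcat_pos j α0 (hcap0 j) (r j) h, hcat_pos j α1 (hcap1 j) (r j) h]
  have part2 : ∀ p pbar : (Fin K → Bool) → ℝ,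
      (∀ α : Fin K → Bool, α ≠ α0 → α ≠ α1 → p α = pbar α) →
      p α0 + p α1 = pbar α0 + pbar α1 →
      ∀ r : Fin J → ℕ,
        (∑ α, p α * seqJoint H q βp βm α r)
          = ∑ α, pbar α * seqJoint H q βp βm α r := by
    intro p pbar hp hsum r
    have key : ∑ α, (p α - pbar α) * seqJoint H q βp βm α r = 0 := by
      rw [← Finset.sum_subset (Finset.subset_univ ({α0, α1} : Finset (Fin K → Bool)))]
      · rw [Finset.sum_pair hne, hjoint r]
        linear_combination (seqJoint H q βp βm α1 r) * hsum
      · intro x _ hx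
        simp only [Finset.mem_insert, Finset.mem_singleton] at hx
        push_neg at hx
        rw [hp x hx.1 hx.2]
        ring
    have expand : ∑ α, (p α - pbar α) * seqJoint H q βp βm α r
        = (∑ α, p α * seqJoint H q βp βm α r)
          - ∑ α, pbar α * seqJoint H q βp βm α r := by
      rw [← Finset.sum_sub_distrib]
      apply Finset.sum_congr rfl
      intros
      ring
    rw [expand] at key
    linarith
  refine ⟨?_, part2, ?_⟩
  · intro j r hr _
    exact ⟨hcat_pos j α0 (hcap0 j) r hr, hcat_pos j α1 (hcap1 j) r hr⟩
  · set d : ℝ := ((2 : ℝ) ^ (K + 1))⁻¹ with hd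
    have hdpos : 0 < d := by positivity
    set c : ℝ := ((2 : ℝ) ^ K)⁻¹ with hc
    have hcpos : 0 < c := by positivity
    have hcd : c = 2 * d := by
      rw [hc, hd, pow_succ]
      field_simp
    refine ⟨(fun _ => c),
      (fun α => c + (if α = α0 then d else if α = α1 then -d else 0)),
      ?_, ?_, ?_, ?_, ?_, ?_⟩
    · intro h
      have := congrFun h α0
      simp at this
      linarith
    · intro α; exact hcpos
    · intro α
      by_cases h1 : α = α0
      · simp [h1]; linarith
      · by_cases h2 : α = α1
        · simp [h1, h2, hne.symm]; linarith [hcd, hdpos]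
        · simp [h1, h2]; exact hcpos
    · rw [Finset.sum_const, Finset.card_univ]
      simp [hc]
    · rw [Finset.sum_add_distrib]
      have h1 : ∑ _α : Fin K → Bool, c = 1 := by
        rw [Finset.sum_const, Finset.card_univ]
        simp [hc]
      have h2 : ∑ α : Fin K → Bool,
          (if α = α0 then d else if α = α1 then -d else 0) = 0 := by
        rw [← Finset.sum_subset (Finset.subset_univ ({α0, α1} : Finset (Fin K → Bool)))]
        · rw [Finset.sum_pair hne]
          simp [hne, hne.symm]
        · intro x _ hx
          simp only [Finset.mem_insert, Finset.mem_singleton] at hx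
          push_neg at hx
          simp [hx.1, hx.2]
      rw [h1, h2, add_zero]
    · apply part2
      · intro α h1 h2
        simp [h1, h2]
      · simp [hne, hne.symm]
        ring
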